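/- Let G be a simple graph on n ≥ 3 vertices with all vertex degrees positive, and let α be a real number. Then for any distinct vertices v_j, v_k, Z_{2α}(G) ≥ (Z_α(G))²/n + (1/2)(d_j^α − d_k^α)² + (2n/(n−2))·(Z_α(G)/n − (d_j^α + d_k^α)/2)², where d_i denotes the degree of v_i. -/
import Mathlib


open Finset

theorem stmt2 {V : Type*} [Fintype V] [DecidableEq V] (G : SimpleGraph V)
    [DecidableRel G.Adj] (hn : 3 ≤ Fintype.card V)
    (hdeg : ∀ v : V, 0 < G.degree v) (α : ℝ) (j k : V) (hjk : j ≠ k) :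
    ∑ v : V, (G.degree v : ℝ) ^ (2 * α) ≥
      (∑ v : V, (G.degree v : ℝ) ^ α) ^ 2 / (Fintype.card V : ℝ)
      + (1 / 2) * ((G.degree j : ℝ) ^ α - (G.degree k : ℝ) ^ α) ^ 2
      + (2 * (Fintype.card V : ℝ) / ((Fintype.card V : ℝ) - 2)) *
          ((∑ v : V, (G.degree v : ℝ) ^ α) / (Fintype.card V : ℝ)
            - ((G.degree j : ℝ) ^ α + (G.degree k : ℝ) ^ α) / 2) ^ 2 := by
  set a : V → ℝ := fun v => (G.degree v : ℝ) ^ α with ha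
  have hrw : ∀ v : V, (G.degree v : ℝ) ^ (2 * α) = a v ^ 2 := by
    intro v
    have hd : (0:ℝ) < (G.degree v : ℝ) := by exact_mod_cast hdeg v
    rw [ha]
    rw [mul_comm, Real.rpow_mul hd.le, Real.rpow_two]
  simp only [hrw]
  set N : ℝ := (Fintype.card V : ℝ) with hN
  have hN3 : (3:ℝ) ≤ N := by rw [hN]; exact_mod_cast hn
  have hNpos : (0:ℝ) < N := by linarith
  have hm : (0:ℝ) < N - 2 := by linarith
  set t : Finset V := Finset.univ \ {j, k} with ht
  have hsub : ({j, k} : Finset V) ⊆ Finset.univ := subset_univ _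
  have hcard : (t.card : ℝ) = N - 2 := by
    rw [ht, Finset.card_sdiff_of_subset hsub, Finset.card_pair hjk, Finset.card_univ]
    have h2 : 2 ≤ Fintype.card V := by omega
    rw [Nat.cast_sub h2, hN]
    norm_num
  have hsum : ∑ v : V, a v = (∑ v ∈ t, a v) + (a j + a k) := by
    rw [ht, ← Finset.sum_pair hjk, Finset.sum_sdiff hsub]
  have hp : ∑ v ∈ ({j, k} : Finset V), a v ^ 2 = a j ^ 2 + a k ^ 2 :=
    Finset.sum_pair hjk
  have hsumsq : ∑ v : V, a v ^ 2 = (∑ v ∈ t, a v ^ 2) + (a j ^ 2 + a k ^ 2) := by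
    rw [ht, ← hp, Finset.sum_sdiff hsub]
  have hC : (∑ v ∈ t, a v) ^ 2 ≤ (N - 2) * ∑ v ∈ t, a v ^ 2 := by
    rw [← hcard]
    exact sq_sum_le_card_mul_sum_sq
  set T : ℝ := ∑ v ∈ t, a v with hT
  set Q : ℝ := ∑ v ∈ t, a v ^ 2 with hQ
  rw [hsum, hsumsq, ge_iff_le]
  have key : (T + (a j + a k)) ^ 2 / N
      + (1 / 2) * (a j - a k) ^ 2
      + (2 * N / (N - 2)) * ((T + (a j + a k)) / N - (a j + a k) / 2) ^ 2
      = a j ^ 2 + a k ^ 2 + T ^ 2 / (N - 2) := by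
    field_simp
    ring
  rw [key]
  have : T ^ 2 / (N - 2) ≤ Q := by
    rw [div_le_iff₀ hm, mul_comm]
    exact hC
  linarith
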